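/- If the true state X satisfies dX/dt = [X,H] + X V and the estimate X̂ satisfies dX̂/dt = [X̂,H] + X̂ V + Δ X̂ (for matrices H, V, Δ of matching dimension), then the right-invariant error E = X X̂^{-1} satisfies dE/dt = [E, H] - E Δ, where [A,B] = AB - BA. -/

import Mathlib

open Matrix

attribute [local instance] Matrix.linftyOpNormedAddCommGroup Matrix.linftyOpNormedSpace
attribute [local instance] Matrix.linftyOpNormedRing Matrix.linftyOpNormedAlgebra

lemma hasDerivAt_ring_inverse' {R : Type*} [NormedRing R] [NormedAlgebra ℝ R]
    [CompleteSpace R] {f : ℝ → R} {f' : R} {t : ℝ}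
    (hu : IsUnit (f t)) (hf : HasDerivAt f f' t) :
    HasDerivAt (fun s => Ring.inverse (f s))
      (-(Ring.inverse (f t) * f' * Ring.inverse (f t))) t := by
  obtain ⟨u, hu⟩ := hu
  have h1 := (hasFDerivAt_ringInverse (𝕜 := ℝ) u)
  rw [hu] at h1
  have h2 := h1.comp t hf.hasFDerivAt
  have := h2.hasDerivAt
  simp [hu.symm, Ring.inverse_unit, mul_assoc] at this ⊢
  exact this

/-- If `dX/dt = [X,H] + X V` and `dX̂/dt = [X̂,H] + X̂ V + Δ X̂`, then the right-invariant
error `E = X X̂⁻¹` satisfies `dE/dt = [E,H] - E Δ`, where `[A,B] = AB - BA`. -/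
theorem error_dynamics {m : ℕ}
    (X Xhat : ℝ → Matrix (Fin m) (Fin m) ℝ)
    (H : Matrix (Fin m) (Fin m) ℝ)
    (V Δ : ℝ → Matrix (Fin m) (Fin m) ℝ)
    (hXinv : ∀ t, IsUnit (X t)) (hXhatinv : ∀ t, IsUnit (Xhat t))
    (hX : ∀ t, HasDerivAt X (X t * H - H * X t + X t * V t) t)
    (hXhat : ∀ t, HasDerivAt Xhat (Xhat t * H - H * Xhat t + Xhat t * V t + Δ t * Xhat t) t)
    (t : ℝ) :
    HasDerivAt (fun s => X s * (Xhat s)⁻¹)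
      ((X t * (Xhat t)⁻¹) * H - H * (X t * (Xhat t)⁻¹)
        - (X t * (Xhat t)⁻¹) * Δ t) t := by
  have hinv : HasDerivAt (fun s => (Xhat s)⁻¹)
      (-((Xhat t)⁻¹ * (Xhat t * H - H * Xhat t + Xhat t * V t + Δ t * Xhat t) * (Xhat t)⁻¹)) t := by
    have := hasDerivAt_ring_inverse' (hXhatinv t) (hXhat t)
    simp only [← Matrix.nonsing_inv_eq_ringInverse] at this
    exact this
  have hmul : HasDerivAt (fun s => X s * (Xhat s)⁻¹) _ t := (hX t).mul hinv
  convert hmul using 1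
  set N := (Xhat t)⁻¹ with hN
  have hdet : IsUnit (Xhat t).det := (Matrix.isUnit_iff_isUnit_det _).1 (hXhatinv t)
  have e1 : N * Xhat t = 1 := Matrix.nonsing_inv_mul _ hdet
  have e2 : Xhat t * N = 1 := Matrix.mul_nonsing_inv _ hdet
  have e1' : ∀ z, N * (Xhat t * z) = z := fun z => by rw [← mul_assoc, e1, one_mul]
  have e2' : ∀ z, Xhat t * (N * z) = z := fun z => by rw [← mul_assoc, e2, one_mul]
  simp only [mul_add, add_mul, mul_sub, sub_mul, mul_assoc, mul_neg, neg_mul, e1, e2, e1', e2',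
    mul_one, one_mul]
  abel
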